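/- For all x, y in ℝ³ with x ≠ y, one has 1/|x−y| = ∫_{ℝ³} ∫₀^∞ (1/(π r⁵)) X_{r,z}(x) X_{r,z}(y) dr dz, where X_{r,z}(x) = 1 if |x−z| ≤ r and 0 otherwise. -/

import Mathlib

open MeasureTheory

/-- The indicator function `X_{r,z}` of the closed ball of radius `r` centered at `z` in `ℝ³`. -/
noncomputable def ballIndicator (r : ℝ) (z x : EuclideanSpace ℝ (Fin 3)) : ℝ :=
  if dist x z ≤ r then 1 else 0

open Set Filter Real Topology

noncomputable section
local notation "E" => EuclideanSpace ℝ (Fin 3)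

-- (iv): ∫_{Ioi m} r^{-5}
lemma int_pow5 {m : ℝ} (hm : 0 < m) :
    ∫ r in Ioi m, ((r:ℝ)^5)⁻¹ = (4*m^4)⁻¹ := by
  have hderiv : ∀ r ∈ Ici m, HasDerivAt (fun r : ℝ => -(4*r^4)⁻¹) ((r^5)⁻¹) r := by
    intro r hr
    have hr0 : (0:ℝ) < r := lt_of_lt_of_le hm hr
    have h1 : HasDerivAt (fun r : ℝ => 4*r^4) (4*(4*r^3)) r :=
      (hasDerivAt_pow 4 r).const_mul 4
    have h2 := (h1.inv (by positivity)).neg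
    refine h2.congr_deriv ?_
    field_simp
  have htop : Tendsto (fun r : ℝ => -(4*r^4)⁻¹) atTop (𝓝 0) := by
    rw [show (0:ℝ) = -0 by ring]
    exact ((tendsto_pow_atTop (by norm_num : 4 ≠ 0)).const_mul_atTop
      (by norm_num : (0:ℝ) < 4)).inv_tendsto_atTop.neg
  have := integral_Ioi_of_hasDerivAt_of_nonneg' hderiv
    (fun r hr => by have : (0:ℝ) < r := hm.trans hr; positivity) htop
  simpa using this

lemma integrable_comp_abs {f : ℝ → ℝ} (hf : IntegrableOn f (Ioi 0)) :
    Integrable (fun x => f |x|) := by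
  have hf' : IntegrableOn (fun x => f |x|) (Ioi 0) := by
    apply hf.congr_fun (fun x hx => ?_) measurableSet_Ioi
    rw [abs_eq_self.mpr (le_of_lt hx)]
  have int_Iic : IntegrableOn (fun x ↦ f |x|) (Iic 0) := by
    rw [← Measure.map_neg_eq_self (volume : Measure ℝ)]
    have m : MeasurableEmbedding fun x : ℝ => -x := (Homeomorph.neg ℝ).measurableEmbedding
    rw [m.integrableOn_map_iff]
    simp_rw [Function.comp_def, abs_neg, neg_preimage, neg_Iic, neg_zero]
    exact Iff.mpr integrableOn_Ici_iff_integrableOn_Ioi hf'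
  rw [← integrableOn_univ, ← Iic_union_Ioi (a := (0:ℝ))]
  exact int_Iic.union hf'

-- B3
lemma int_B3 {a : ℝ} (ha : 0 < a) :
    IntegrableOn (fun s : ℝ => ((s+a)^2)⁻¹) (Ioi 0) ∧
      ∫ s in Ioi (0:ℝ), ((s+a)^2)⁻¹ = a⁻¹ := by
  have hderiv : ∀ s ∈ Ici (0:ℝ), HasDerivAt (fun s : ℝ => -(s+a)⁻¹) (((s+a)^2)⁻¹) s := by
    intro s hs
    have h0 : s + a ≠ 0 := by have : (0:ℝ) ≤ s := hs; positivity
    have h1 : HasDerivAt (fun s : ℝ => s + a) 1 s := (hasDerivAt_id s).add_const a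
    have h2 := (h1.inv h0).neg
    refine h2.congr_deriv ?_
    field_simp
  have htop : Tendsto (fun s : ℝ => -(s+a)⁻¹) atTop (𝓝 0) := by
    rw [show (0:ℝ) = -0 by ring]
    exact (tendsto_atTop_add_const_right _ a tendsto_id).inv_tendsto_atTop.neg
  have hpos : ∀ s ∈ Ioi (0:ℝ), 0 ≤ ((s+a)^2)⁻¹ := fun s hs => by positivity
  refine ⟨integrableOn_Ioi_deriv_of_nonneg' hderiv hpos htop, ?_⟩
  have := integral_Ioi_of_hasDerivAt_of_nonneg' hderiv hpos htop
  simpa using this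

-- B1 on Ioi 0
lemma int_B1 {c : ℝ} (hc : 0 < c) :
    IntegrableOn (fun s : ℝ => ((c^2+s^2)^2)⁻¹) (Ioi 0) ∧
      ∫ s in Ioi (0:ℝ), ((c^2+s^2)^2)⁻¹ = π/(4*c^3) := by
  set g : ℝ → ℝ := fun s => s/(2*c^2*(c^2+s^2)) + arctan (s/c) / (2*c^3) with hg
  have hderiv : ∀ s ∈ Ici (0:ℝ), HasDerivAt g (((c^2+s^2)^2)⁻¹) s := by
    intro s _
    have hden : 2*c^2*(c^2+s^2) ≠ 0 := by positivity
    have h1 : HasDerivAt (fun s : ℝ => s/(2*c^2*(c^2+s^2)))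
        ((1*(2*c^2*(c^2+s^2)) - s*(2*c^2*(2*s)))/(2*c^2*(c^2+s^2))^2) s := by
      exact (hasDerivAt_id s).div
        (((hasDerivAt_pow 2 s).const_add (c^2)).const_mul (2*c^2) |>.congr_deriv (by ring)) hden
    have h2 : HasDerivAt (fun s : ℝ => arctan (s/c) / (2*c^3))
        ((1+ (s/c)^2)⁻¹ * (1/c) / (2*c^3)) s := by
      have ha := (Real.hasDerivAt_arctan (s/c)).comp s
        ((hasDerivAt_id s).div_const c)
      exact ha.div_const (2*c^3) |>.congr_deriv (by ring)
    have := h1.add h2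
    refine this.congr_deriv ?_
    have h3 : c^2+s^2 ≠ 0 := by positivity
    field_simp
    ring
  have htop : Tendsto g atTop (𝓝 (0 + (π/2)/(2*c^3))) := by
    apply Tendsto.add
    · -- s/(2c²(c²+s²)) → 0
      have h1 : Tendsto (fun s : ℝ => 2*c^2*(c^2/s + s)) atTop atTop := by
        apply Tendsto.const_mul_atTop (by positivity)
        exact Tendsto.add_atTop (tendsto_const_nhds.div_atTop tendsto_id) tendsto_id
      have h2 := h1.inv_tendsto_atTop
      apply h2.congr'
      filter_upwards [eventually_gt_atTop (0:ℝ)] with s hs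
      show (2*c^2*(c^2/s+s))⁻¹ = _
      field_simp
    · exact ((Real.tendsto_arctan_atTop.mono_right nhdsWithin_le_nhds).comp
        (tendsto_id.atTop_div_const hc)).div_const (2*c^3)
  have hpos : ∀ s ∈ Ioi (0:ℝ), 0 ≤ ((c^2+s^2)^2)⁻¹ := fun s _ => by positivity
  have hderiv' : ∀ s ∈ Ioi (0:ℝ), HasDerivAt g (((c^2+s^2)^2)⁻¹) s :=
    fun s hs => hderiv s (mem_Ici.mpr (le_of_lt hs))
  refine ⟨integrableOn_Ioi_deriv_of_nonneg' hderiv hpos htop, ?_⟩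
  have := integral_Ioi_of_hasDerivAt_of_nonneg' hderiv hpos htop
  rw [this, hg]
  simp [Real.arctan_zero]
  ring

-- B2 on Ioi 0 : ∫_{0}^∞ (sqrt(c²+u²))⁻³ = c⁻²
lemma int_B2 {c : ℝ} (hc : 0 < c) :
    IntegrableOn (fun u : ℝ => ((Real.sqrt (c^2+u^2))^3)⁻¹) (Ioi 0) ∧
      ∫ u in Ioi (0:ℝ), ((Real.sqrt (c^2+u^2))^3)⁻¹ = (c^2)⁻¹ := by
  set g : ℝ → ℝ := fun u => u/(c^2 * Real.sqrt (c^2+u^2)) with hg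
  have key : ∀ u : ℝ, (0:ℝ) < c^2 + u^2 := fun u => by positivity
  have hderiv : ∀ u ∈ Ici (0:ℝ), HasDerivAt g (((Real.sqrt (c^2+u^2))^3)⁻¹) u := by
    intro u _
    have h0 := key u
    have hs : (0:ℝ) < Real.sqrt (c^2+u^2) := Real.sqrt_pos.mpr h0
    have h1 : HasDerivAt (fun u : ℝ => Real.sqrt (c^2+u^2)) (2*u / (2*Real.sqrt (c^2+u^2))) u := by
      have := (Real.hasDerivAt_sqrt (ne_of_gt h0)).comp u
        (((hasDerivAt_pow 2 u).const_add (c^2)))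
      refine this.congr_deriv ?_
      simp [Nat.cast_ofNat]
      ring
    have h2 : HasDerivAt (fun u : ℝ => c^2 * Real.sqrt (c^2+u^2))
        (c^2 * (2*u / (2*Real.sqrt (c^2+u^2)))) u := h1.const_mul _
    have h3 := (hasDerivAt_id u).div h2 (by positivity)
    refine h3.congr_deriv ?_
    have hsq : Real.sqrt (c^2+u^2) ^ 2 = c^2 + u^2 := Real.sq_sqrt h0.le
    field_simp
    simp only [id]
    linear_combination hsq
  have htop : Tendsto g atTop (𝓝 ((c^2)⁻¹)) := by
    have h2 : Tendsto (fun u : ℝ => c^2/u^2 + 1) atTop (𝓝 (0 + 1)) := by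
      refine Tendsto.add ?_ tendsto_const_nhds
      exact tendsto_const_nhds.div_atTop (tendsto_pow_atTop (n := 2) (by norm_num))
    rw [zero_add] at h2
    have h3 : Tendsto (fun u : ℝ => Real.sqrt (c^2/u^2 + 1)) atTop (𝓝 1) := by
      have := (Real.continuous_sqrt.tendsto 1).comp h2
      simpa [Function.comp_def] using this
    have h1 : Tendsto (fun u : ℝ => c^2 * Real.sqrt (c^2/u^2 + 1)) atTop (𝓝 (c^2)) := by
      simpa using h3.const_mul (c^2)
    have h2 := h1.inv₀ (by positivity)
    apply h2.congr'
    filter_upwards [eventually_gt_atTop (0:ℝ)] with u hu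
    have h4 : Real.sqrt (c^2 + u^2) = u * Real.sqrt (c^2/u^2 + 1) := by
      rw [← Real.sqrt_sq hu.le, ← Real.sqrt_mul (by positivity)]
      congr 1
      field_simp
      rw [Real.sq_sqrt (by positivity)]
    have hs1 : (0:ℝ) < Real.sqrt (c^2/u^2+1) := Real.sqrt_pos.mpr (by positivity)
    show (c^2 * Real.sqrt (c^2/u^2+1))⁻¹ = u / (c^2 * Real.sqrt (c^2+u^2))
    rw [h4]
    field_simp
  have hpos : ∀ u ∈ Ioi (0:ℝ), 0 ≤ ((Real.sqrt (c^2+u^2))^3)⁻¹ := fun u _ => by positivity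
  refine ⟨integrableOn_Ioi_deriv_of_nonneg' hderiv hpos htop, ?_⟩
  have := integral_Ioi_of_hasDerivAt_of_nonneg' hderiv hpos htop
  rw [this, hg]
  simp

lemma lint_B1 {c : ℝ} (hc : 0 < c) :
    ∫⁻ s : ℝ, ENNReal.ofReal (((c^2+s^2)^2)⁻¹) = ENNReal.ofReal (π/(2*c^3)) := by
  have hint : Integrable (fun s : ℝ => ((c^2+s^2)^2)⁻¹) := by
    have := integrable_comp_abs (int_B1 hc).1
    simpa [sq_abs] using this
  rw [← ofReal_integral_eq_lintegral_ofReal hint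
    (Eventually.of_forall fun s => by positivity)]
  congr 1
  have h1 : ∫ s : ℝ, ((c^2+s^2)^2)⁻¹ = ∫ s : ℝ, ((c^2+|s|^2)^2)⁻¹ := by
    simp [sq_abs]
  rw [h1, integral_comp_abs (f := fun t => ((c^2+t^2)^2)⁻¹), (int_B1 hc).2]
  ring

lemma lint_B2 {c : ℝ} (hc : 0 < c) :
    ∫⁻ u : ℝ, ENNReal.ofReal (((Real.sqrt (c^2+u^2))^3)⁻¹) = ENNReal.ofReal (2*(c^2)⁻¹) := by
  have hint : Integrable (fun u : ℝ => ((Real.sqrt (c^2+u^2))^3)⁻¹) := by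
    have := integrable_comp_abs (int_B2 hc).1
    simpa [sq_abs] using this
  rw [← ofReal_integral_eq_lintegral_ofReal hint
    (Eventually.of_forall fun s => by positivity)]
  congr 1
  have h1 : ∫ u : ℝ, ((Real.sqrt (c^2+u^2))^3)⁻¹
      = ∫ u : ℝ, ((Real.sqrt (c^2+|u|^2))^3)⁻¹ := by simp [sq_abs]
  rw [h1, integral_comp_abs (f := fun t => ((Real.sqrt (c^2+t^2))^3)⁻¹), (int_B2 hc).2]

lemma lint_B3 {a : ℝ} (ha : 0 < a) :
    ∫⁻ s : ℝ, ENNReal.ofReal (((|s|+a)^2)⁻¹) = ENNReal.ofReal (2*a⁻¹) := by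
  have hint : Integrable (fun s : ℝ => ((|s|+a)^2)⁻¹) :=
    integrable_comp_abs (f := fun t => ((t+a)^2)⁻¹) (int_B3 ha).1
  rw [← ofReal_integral_eq_lintegral_ofReal hint
    (Eventually.of_forall fun s => by positivity)]
  congr 1
  rw [integral_comp_abs (f := fun t => ((t+a)^2)⁻¹), (int_B3 ha).2]

lemma K2_calc {b : ℝ} (hb : 0 < b) :
    ∫⁻ v : Fin 2 → ℝ, ENNReal.ofReal (((b^2 + (v 0)^2 + (v 1)^2)^2)⁻¹)
      = ENNReal.ofReal (π * (b^2)⁻¹) := by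
  have MP2 := volume_preserving_piFinSuccAbove (fun _ : Fin 2 => ℝ) 0
  have MP1 := volume_preserving_funUnique (Fin 1) ℝ
  have hcont : Continuous fun p : ℝ × (Fin 1 → ℝ) =>
      (((b^2 + p.1^2 + (p.2 0)^2)^2)⁻¹ : ℝ) := by
    apply Continuous.inv₀
    · fun_prop
    · intro p; positivity
  have hG : Measurable fun p : ℝ × (Fin 1 → ℝ) =>
      ENNReal.ofReal (((b^2 + p.1^2 + (p.2 0)^2)^2)⁻¹) :=
    ENNReal.measurable_ofReal.comp hcont.measurable
  calc ∫⁻ v : Fin 2 → ℝ, ENNReal.ofReal (((b^2 + (v 0)^2 + (v 1)^2)^2)⁻¹)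
      = ∫⁻ v : Fin 2 → ℝ, (fun p : ℝ × (Fin 1 → ℝ) =>
          ENNReal.ofReal (((b^2 + p.1^2 + (p.2 0)^2)^2)⁻¹))
          ((MeasurableEquiv.piFinSuccAbove (fun _ : Fin 2 => ℝ) 0) v) := by
        apply lintegral_congr
        intro v
        simp [MeasurableEquiv.piFinSuccAbove, Fin.succAbove, Fin.tail]
    _ = ∫⁻ p : ℝ × (Fin 1 → ℝ),
          ENNReal.ofReal (((b^2 + p.1^2 + (p.2 0)^2)^2)⁻¹) := MP2.lintegral_comp hG
    _ = ∫⁻ s : ℝ, ∫⁻ q : Fin 1 → ℝ,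
          ENNReal.ofReal (((b^2 + s^2 + (q 0)^2)^2)⁻¹) := by
        rw [MeasureTheory.Measure.volume_eq_prod, lintegral_prod _ hG.aemeasurable]
    _ = ∫⁻ s : ℝ, ∫⁻ u : ℝ,
          ENNReal.ofReal (((b^2 + s^2 + u^2)^2)⁻¹) := by
        apply lintegral_congr
        intro s
        have := MP1.lintegral_comp (g := MeasurableEquiv.funUnique (Fin 1) ℝ)
          (f := fun u : ℝ => ENNReal.ofReal (((b^2 + s^2 + u^2)^2)⁻¹))
          (by
            apply ENNReal.measurable_ofReal.comp
            apply Continuous.measurable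
            apply Continuous.inv₀
            · fun_prop
            · intro u; positivity)
        rw [← this]
        apply lintegral_congr
        intro q
        rfl
    _ = ∫⁻ s : ℝ, ENNReal.ofReal (π/2 * ((Real.sqrt (b^2+s^2))^3)⁻¹) := by
        apply lintegral_congr
        intro s
        have hc : (0:ℝ) < Real.sqrt (b^2+s^2) := Real.sqrt_pos.mpr (by positivity)
        have hsq : Real.sqrt (b^2+s^2) ^ 2 = b^2 + s^2 := Real.sq_sqrt (by positivity)
        have h1 : ∀ u : ℝ, b^2 + s^2 + u^2 = (Real.sqrt (b^2+s^2))^2 + u^2 := fun u => by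
          rw [hsq]
        calc ∫⁻ u : ℝ, ENNReal.ofReal (((b^2 + s^2 + u^2)^2)⁻¹)
            = ∫⁻ u : ℝ, ENNReal.ofReal ((((Real.sqrt (b^2+s^2))^2 + u^2)^2)⁻¹) := by
              apply lintegral_congr; intro u; rw [h1]
          _ = ENNReal.ofReal (π/(2*(Real.sqrt (b^2+s^2))^3)) := lint_B1 hc
          _ = ENNReal.ofReal (π/2 * ((Real.sqrt (b^2+s^2))^3)⁻¹) := by
              congr 1; ring
    _ = ENNReal.ofReal (π/2) * ∫⁻ s : ℝ,
          ENNReal.ofReal (((Real.sqrt (b^2+s^2))^3)⁻¹) := by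
        rw [← lintegral_const_mul']
        · apply lintegral_congr
          intro s
          rw [← ENNReal.ofReal_mul (by positivity)]
        · exact ENNReal.ofReal_ne_top
    _ = ENNReal.ofReal (π/2) * ENNReal.ofReal (2*(b^2)⁻¹) := by rw [lint_B2 hb]
    _ = ENNReal.ofReal (π * (b^2)⁻¹) := by
        rw [← ENNReal.ofReal_mul (by positivity)]
        congr 1
        ring

lemma K_calc {a : ℝ} (ha : 0 < a) :
    ∫⁻ w : Fin 3 → ℝ, ENNReal.ofReal ((((|w 0|+a)^2 + (w 1)^2 + (w 2)^2)^2)⁻¹)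
      = ENNReal.ofReal (2*π*a⁻¹) := by
  have MP3 := volume_preserving_piFinSuccAbove (fun _ : Fin 3 => ℝ) 0
  have hcont : Continuous fun p : ℝ × (Fin 2 → ℝ) =>
      ((((|p.1|+a)^2 + (p.2 0)^2 + (p.2 1)^2)^2)⁻¹ : ℝ) := by
    apply Continuous.inv₀
    · fun_prop
    · intro p; positivity
  have hG : Measurable fun p : ℝ × (Fin 2 → ℝ) =>
      ENNReal.ofReal ((((|p.1|+a)^2 + (p.2 0)^2 + (p.2 1)^2)^2)⁻¹) :=
    ENNReal.measurable_ofReal.comp hcont.measurable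
  calc ∫⁻ w : Fin 3 → ℝ, ENNReal.ofReal ((((|w 0|+a)^2 + (w 1)^2 + (w 2)^2)^2)⁻¹)
      = ∫⁻ w : Fin 3 → ℝ, (fun p : ℝ × (Fin 2 → ℝ) =>
          ENNReal.ofReal ((((|p.1|+a)^2 + (p.2 0)^2 + (p.2 1)^2)^2)⁻¹))
          ((MeasurableEquiv.piFinSuccAbove (fun _ : Fin 3 => ℝ) 0) w) := by
        apply lintegral_congr
        intro w
        simp [MeasurableEquiv.piFinSuccAbove, Fin.succAbove, Fin.tail]
    _ = ∫⁻ p : ℝ × (Fin 2 → ℝ),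
          ENNReal.ofReal ((((|p.1|+a)^2 + (p.2 0)^2 + (p.2 1)^2)^2)⁻¹) :=
        MP3.lintegral_comp hG
    _ = ∫⁻ t : ℝ, ∫⁻ v : Fin 2 → ℝ,
          ENNReal.ofReal ((((|t|+a)^2 + (v 0)^2 + (v 1)^2)^2)⁻¹) := by
        rw [MeasureTheory.Measure.volume_eq_prod, lintegral_prod _ hG.aemeasurable]
    _ = ∫⁻ t : ℝ, ENNReal.ofReal (π * (((|t|+a))^2)⁻¹) := by
        apply lintegral_congr
        intro t
        exact K2_calc (by positivity)
    _ = ENNReal.ofReal π * ∫⁻ t : ℝ, ENNReal.ofReal (((|t|+a)^2)⁻¹) := by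
        rw [← lintegral_const_mul' _ _ ENNReal.ofReal_ne_top]
        apply lintegral_congr
        intro t
        rw [← ENNReal.ofReal_mul (by positivity)]
    _ = ENNReal.ofReal π * ENNReal.ofReal (2*a⁻¹) := by rw [lint_B3 ha]
    _ = ENNReal.ofReal (2*π*a⁻¹) := by
        rw [← ENNReal.ofReal_mul (by positivity)]
        congr 1
        ring

lemma max_sq_abs {t a : ℝ} (ha : 0 ≤ a) :
    max ((t-a)^2) ((t+a)^2) = (|t|+a)^2 := by
  rcases le_or_gt 0 t with h | h
  · rw [max_eq_right (by nlinarith), abs_of_nonneg h]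
  · rw [max_eq_left (by nlinarith), abs_of_neg h]
    ring

lemma max_dist_pow {a : ℝ} (ha : 0 < a) (w : E) :
    max (dist (a • EuclideanSpace.single (0 : Fin 3) (1:ℝ)) w)
        (dist (-(a • EuclideanSpace.single (0 : Fin 3) (1:ℝ))) w) ^ 4
      = ((|w 0|+a)^2 + (w 1)^2 + (w 2)^2)^2 := by
  set e₁ : E := EuclideanSpace.single (0 : Fin 3) (1:ℝ) with he
  have happ : ∀ i : Fin 3, (a • e₁) i = if i = 0 then a else 0 := by
    intro i
    simp [he, EuclideanSpace.single_apply, mul_comm]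
  have happ' : ∀ i : Fin 3, (-(a • e₁)) i = if i = 0 then -a else 0 := by
    intro i
    rcases eq_or_ne i 0 with rfl | h
    · simp [happ]
    · simp [happ, h]
  set A := (w 0 - a)^2 + ((w 1)^2 + (w 2)^2) with hA
  set B := (w 0 + a)^2 + ((w 1)^2 + (w 2)^2) with hB
  have hA0 : 0 ≤ A := by positivity
  have hB0 : 0 ≤ B := by positivity
  have h1 : dist (a • e₁) w = Real.sqrt A := by
    rw [EuclideanSpace.dist_eq, Fin.sum_univ_three]
    congr 1
    simp [happ, Real.dist_eq, sq_abs, hA]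
    ring
  have h2 : dist (-(a • e₁)) w = Real.sqrt B := by
    rw [EuclideanSpace.dist_eq, Fin.sum_univ_three]
    congr 1
    simp [happ', Real.dist_eq, sq_abs, hB]
    ring
  have hmono : Monotone Real.sqrt := fun _ _ h => Real.sqrt_le_sqrt h
  rw [h1, h2, ← hmono.map_max]
  have hM0 : 0 ≤ max A B := le_max_of_le_left hA0
  have : Real.sqrt (max A B) ^ 4 = (max A B)^2 := by
    rw [show (4:ℕ) = 2*2 from rfl, pow_mul, Real.sq_sqrt hM0]
  rw [this, hA, hB, max_add_add_right]
  rw [show ∀ t : ℝ, (t - a)^2 = ((t:ℝ)-a)^2 from fun t => rfl]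
  rw [max_sq_abs ha.le]
  ring

lemma euclid_lint (x y : E) (hxy : x ≠ y) :
    ∫⁻ z : E, ENNReal.ofReal (((max (dist x z) (dist y z))^4)⁻¹)
      = ENNReal.ofReal (2*π*(dist x y / 2)⁻¹) := by
  set d := dist x y with hd
  have hd0 : 0 < d := dist_pos.mpr hxy
  set a := d/2 with ha
  have ha0 : 0 < a := by positivity
  set e₁ : E := EuclideanSpace.single (0 : Fin 3) (1:ℝ) with he
  set u : E := d⁻¹ • (x - y) with hu
  have hnu : ‖u‖ = 1 := by
    rw [hu, norm_smul, ← dist_eq_norm, ← hd, Real.norm_eq_abs,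
      abs_of_pos (inv_pos.mpr hd0)]
    exact inv_mul_cancel₀ hd0.ne'
  have hne1 : ‖e₁‖ = 1 := by
    rw [he, EuclideanSpace.norm_single]
    norm_num
  obtain ⟨L, hL⟩ : ∃ L : E ≃ₗᵢ[ℝ] E, L e₁ = u := by
    rcases eq_or_ne e₁ u with h | h
    · exact ⟨LinearIsometryEquiv.refl ℝ E, h⟩
    · exact ⟨Submodule.reflection (ℝ ∙ (e₁ - u))ᗮ, Submodule.reflection_sub (by rw [hnu, hne1])⟩
  set mid : E := (2:ℝ)⁻¹ • (x + y) with hmid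
  set φ : E → E := fun w => mid + L w with hφ
  have hMP : MeasurePreserving φ volume volume :=
    (measurePreserving_add_left volume mid).comp L.measurePreserving
  have hxmid : x - mid = a • u := by
    rw [hmid, hu, ha, smul_smul]
    rw [show d / 2 * d⁻¹ = (2:ℝ)⁻¹ by field_simp]
    module
  have hymid : y - mid = -(a • u) := by
    rw [hmid, hu, ha, smul_smul]
    rw [show d / 2 * d⁻¹ = (2:ℝ)⁻¹ by field_simp]
    module
  have key : ∀ w : E,
      max (dist x (φ w)) (dist y (φ w))
        = max (dist (a • e₁) w) (dist (-(a • e₁)) w) := by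
    intro w
    have k1 : dist x (φ w) = dist (a • e₁) w := by
      have e : x - (mid + L w) = L (a • e₁ - w) := by
        simp only [map_sub, _root_.map_smul, hL]
        rw [← hxmid]
        abel
      show dist x (mid + L w) = dist (a • e₁) w
      rw [dist_eq_norm, e, L.norm_map, ← dist_eq_norm]
    have k2 : dist y (φ w) = dist (-(a • e₁)) w := by
      have e : y - (mid + L w) = L (-(a • e₁) - w) := by
        simp only [map_sub, map_neg, _root_.map_smul, hL]
        rw [← hymid]
        abel
      show dist y (mid + L w) = dist (-(a • e₁)) w
      rw [dist_eq_norm, e, L.norm_map, ← dist_eq_norm]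
    rw [k1, k2]
  -- measurability of the integrand
  have hmpos : ∀ z : E, 0 < max (dist x z) (dist y z) := by
    intro z
    by_contra h
    push_neg at h
    have h1 : dist x z = 0 := le_antisymm (le_trans (le_max_left _ _) h) dist_nonneg
    have h2 : dist y z = 0 := le_antisymm (le_trans (le_max_right _ _) h) dist_nonneg
    exact hxy (by rw [dist_eq_zero] at h1 h2; rw [h1, h2])
  have hcont : Continuous fun z : E => (((max (dist x z) (dist y z))^4)⁻¹ : ℝ) := by
    apply Continuous.inv₀
    · fun_prop
    · intro z
      exact pow_ne_zero _ (hmpos z).ne'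
  have hmeas : Measurable fun z : E =>
      ENNReal.ofReal (((max (dist x z) (dist y z))^4)⁻¹) :=
    ENNReal.measurable_ofReal.comp hcont.measurable
  rw [← hMP.lintegral_comp hmeas]
  have step1 : ∀ w : E,
      ENNReal.ofReal (((max (dist x (φ w)) (dist y (φ w)))^4)⁻¹)
        = ENNReal.ofReal ((((|w 0|+a)^2 + (w 1)^2 + (w 2)^2)^2)⁻¹) := by
    intro w
    rw [key w, max_dist_pow ha0 w]
  calc ∫⁻ w : E, ENNReal.ofReal (((max (dist x (φ w)) (dist y (φ w)))^4)⁻¹)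
      = ∫⁻ w : E, ENNReal.ofReal ((((|w 0|+a)^2 + (w 1)^2 + (w 2)^2)^2)⁻¹) :=
        lintegral_congr step1
    _ = ∫⁻ w : Fin 3 → ℝ,
          ENNReal.ofReal ((((|w 0|+a)^2 + (w 1)^2 + (w 2)^2)^2)⁻¹) := by
        have MPψ := PiLp.volume_preserving_toLp (Fin 3)
        rw [← MPψ.lintegral_comp]
        · apply ENNReal.measurable_ofReal.comp
          apply Continuous.measurable
          apply Continuous.inv₀
          · fun_prop
          · intro w; positivity
    _ = ENNReal.ofReal (2*π*a⁻¹) := K_calc ha0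



lemma max_dist_pos {x y z : E} (hxy : x ≠ y) :
    0 < max (dist x z) (dist y z) := by
  by_contra h
  push_neg at h
  have h1 : dist x z = 0 := le_antisymm (le_trans (le_max_left _ _) h) dist_nonneg
  have h2 : dist y z = 0 := le_antisymm (le_trans (le_max_right _ _) h) dist_nonneg
  exact hxy (by rw [dist_eq_zero] at h1 h2; rw [h1, h2])

lemma inner_r (x y z : E) (hxy : x ≠ y) :
    ∫ r in Ioi (0:ℝ), 1 / (π * r ^ 5) * ballIndicator r z x * ballIndicator r z y
      = π⁻¹ * (4 * (max (dist x z) (dist y z))^4)⁻¹ := by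
  set m := max (dist x z) (dist y z) with hm
  have hm0 : 0 < m := max_dist_pos hxy
  have heq : ∀ r : ℝ,
      1 / (π * r ^ 5) * ballIndicator r z x * ballIndicator r z y
        = Set.indicator (Ici m) (fun r => π⁻¹ * ((r:ℝ)^5)⁻¹) r := by
    intro r
    unfold ballIndicator
    rw [Set.indicator_apply]
    by_cases h1 : dist x z ≤ r <;> by_cases h2 : dist y z ≤ r <;>
      simp [mem_Ici, hm, max_le_iff, h1, h2, one_div, mul_inv] <;> ring
  calc ∫ r in Ioi (0:ℝ), 1 / (π * r ^ 5) * ballIndicator r z x * ballIndicator r z y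
      = ∫ r in Ioi (0:ℝ), Set.indicator (Ici m) (fun r => π⁻¹ * ((r:ℝ)^5)⁻¹) r := by
        exact integral_congr_ae (Eventually.of_forall fun r => heq r)
    _ = ∫ r in Ici m, π⁻¹ * ((r:ℝ)^5)⁻¹ := by
        have hset : Ici m ∩ Ioi (0:ℝ) = Ici m :=
          inter_eq_self_of_subset_left (fun r hr => lt_of_lt_of_le hm0 hr)
        rw [integral_indicator measurableSet_Ici, Measure.restrict_restrict measurableSet_Ici,
          hset]
    _ = ∫ r in Ioi m, π⁻¹ * ((r:ℝ)^5)⁻¹ := integral_Ici_eq_integral_Ioi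
    _ = π⁻¹ * ∫ r in Ioi m, ((r:ℝ)^5)⁻¹ := integral_const_mul _ _
    _ = π⁻¹ * (4 * m^4)⁻¹ := by rw [int_pow5 hm0]

theorem fefferman_de_la_llave' (x y : EuclideanSpace ℝ (Fin 3)) (hxy : x ≠ y) :
    1 / ‖x - y‖ =
      ∫ z : EuclideanSpace ℝ (Fin 3),
        ∫ r in Set.Ioi (0 : ℝ),
          1 / (Real.pi * r ^ 5) * ballIndicator r z x * ballIndicator r z y := by
  have hd0 : (0:ℝ) < dist x y := dist_pos.mpr hxy
  have hcont : Continuous fun z : E => (((max (dist x z) (dist y z))^4)⁻¹ : ℝ) := by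
    apply Continuous.inv₀
    · fun_prop
    · intro z
      exact pow_ne_zero _ (max_dist_pos hxy).ne'
  calc (1 : ℝ) / ‖x - y‖ = π⁻¹ * 4⁻¹ * (2*π*(dist x y / 2)⁻¹) := by
        rw [← dist_eq_norm]
        field_simp
        ring
    _ = π⁻¹ * 4⁻¹ * ∫ z : E, ((max (dist x z) (dist y z))^4)⁻¹ := by
        congr 1
        rw [integral_eq_lintegral_of_nonneg_ae
          (Eventually.of_forall fun z => by positivity) hcont.aestronglyMeasurable,
          euclid_lint x y hxy, ENNReal.toReal_ofReal (by positivity)]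
    _ = ∫ z : E, π⁻¹ * 4⁻¹ * ((max (dist x z) (dist y z))^4)⁻¹ :=
        (integral_const_mul _ _).symm
    _ = ∫ z : E, π⁻¹ * (4 * (max (dist x z) (dist y z))^4)⁻¹ := by
        congr 1
        funext z
        rw [mul_inv]
        ring
    _ = ∫ z : E,
          ∫ r in Set.Ioi (0 : ℝ),
            1 / (Real.pi * r ^ 5) * ballIndicator r z x * ballIndicator r z y := by
        congr 1
        funext z
        rw [inner_r x y z hxy]

end
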